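/- Let F be an algebraically closed field, e₁ = (1,0,0), e₂ = (0,1,0), and let k₁, k₂ ≥ 2 be integers. For A ∈ O(F), there exist X, Y ∈ O(F) with A = (0, e₁; 0, 0)·X^{k₁} + (0, 0; e₂, 0)·Y^{k₂} if and only if A has the form (α, (b₁,0,b₃); (0,c₂,c₃), δ). -/

import Mathlib

/-- Zorn vector matrices: the split octonion algebra over `F`. -/
structure Oct (F : Type*) where
  a : F              -- upper-left scalar η
  b : Fin 3 → F      -- upper-right vector x
  c : Fin 3 → F      -- lower-left vector y
  d : F              -- lower-right scalar ζ

namespace Oct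

variable {F : Type*} [Field F]

/-- standard bilinear form on F^3 -/
def dot (x y : Fin 3 → F) : F := x 0 * y 0 + x 1 * y 1 + x 2 * y 2

/-- cross product on F^3, satisfying ⟨x ∧ y, z⟩ = det(x,y,z) -/
def cross (x y : Fin 3 → F) : Fin 3 → F :=
  ![x 1 * y 2 - x 2 * y 1, x 2 * y 0 - x 0 * y 2, x 0 * y 1 - x 1 * y 0]

instance : Add (Oct F) :=
  ⟨fun A B => ⟨A.a + B.a, A.b + B.b, A.c + B.c, A.d + B.d⟩⟩

instance : Mul (Oct F) :=
  ⟨fun A B =>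
    ⟨A.a * B.a + dot A.b B.c,
     A.a • B.b + B.d • A.b + cross A.c B.c,
     A.d • B.c + B.a • A.c + cross A.b B.b,
     A.d * B.d + dot A.c B.b⟩⟩

instance : SMul F (Oct F) :=
  ⟨fun t A => ⟨t * A.a, t • A.b, t • A.c, t * A.d⟩⟩

instance : One (Oct F) := ⟨⟨1, 0, 0, 1⟩⟩

/-- powers, via A^{n+1} = A · A^n (well-defined by power-associativity) -/
def pow (A : Oct F) : ℕ → Oct F
  | 0 => 1
  | n + 1 => A * pow A n

/-- octonion conjugation -/
def conj (A : Oct F) : Oct F := ⟨A.d, -A.b, -A.c, A.a⟩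

/-- the norm form -/
def norm (A : Oct F) : F := A.a * A.d - dot A.b A.c

end Oct

namespace Oct
variable {F : Type*} [Field F]

lemma mul_def (A B : Oct F) : A * B =
  ⟨A.a * B.a + dot A.b B.c,
   A.a • B.b + B.d • A.b + cross A.c B.c,
   A.d • B.c + B.a • A.c + cross A.b B.b,
   A.d * B.d + dot A.c B.b⟩ := rfl

lemma add_def (A B : Oct F) : A + B = ⟨A.a + B.a, A.b + B.b, A.c + B.c, A.d + B.d⟩ := rfl

lemma one_def : (1 : Oct F) = ⟨1, 0, 0, 1⟩ := rfl

lemma cross_self (v : Fin 3 → F) : cross v v = 0 := by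
  funext i; fin_cases i <;> (simp [cross]; ring)

lemma cross_zero_left (v : Fin 3 → F) : cross 0 v = 0 := by
  funext i; fin_cases i <;> simp [cross]

lemma cross_zero_right (v : Fin 3 → F) : cross v 0 = 0 := by
  funext i; fin_cases i <;> simp [cross]

lemma dot_zero_right (v : Fin 3 → F) : dot v 0 = 0 := by simp [dot]

lemma dot_zero_left (v : Fin 3 → F) : dot 0 v = 0 := by simp [dot]

lemma mul_one' (A : Oct F) : A * 1 = A := by
  cases A with
  | mk a b c d =>
    simp [mul_def, one_def, cross_zero_right, dot_zero_right]

/-- idempotent powers -/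
lemma pow_idem (x y : Fin 3 → F) (h : dot x y = 0) :
    ∀ n, pow (⟨0, x, y, 1⟩ : Oct F) (n + 1) = ⟨0, x, y, 1⟩ := by
  have hyx : dot y x = 0 := by simpa [dot, mul_comm] using h
  intro n
  induction n with
  | zero => simp [pow, mul_one']
  | succ n ih =>
    show (⟨0, x, y, 1⟩ : Oct F) * pow ⟨0, x, y, 1⟩ (n + 1) = _
    rw [ih, mul_def]
    simp [h, hyx, cross_self]

lemma dot_smul_right (t : F) (x y : Fin 3 → F) : dot x (t • y) = t * dot x y := by
  simp [dot]; ring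

lemma cross_smul_right (t : F) (x y : Fin 3 → F) : cross x (t • y) = t • cross x y := by
  funext i; fin_cases i <;> (simp [cross]; ring)

/-- scaled powers -/
lemma pow_scaled (η : F) (x y : Fin 3 → F) (h : dot x y = 0) :
    ∀ n, pow (⟨η, x, y, 0⟩ : Oct F) (n + 1) =
      ⟨η ^ n * η, (η ^ n) • x, (η ^ n) • y, 0⟩ := by
  have hyx : dot y x = 0 := by simpa [dot, mul_comm] using h
  intro n
  induction n with
  | zero => simp [pow, mul_one']
  | succ n ih =>
    show (⟨η, x, y, 0⟩ : Oct F) * pow ⟨η, x, y, 0⟩ (n + 1) = _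
    rw [ih, mul_def]
    simp only [dot_smul_right, cross_smul_right, cross_self, h, hyx, smul_smul,
      smul_zero, mul_zero, zero_smul, add_zero, zero_add, zero_mul, mul_zero,
      Oct.mk.injEq]
    exact ⟨by ring, by rw [pow_succ, mul_comm], by rw [pow_succ], trivial⟩

lemma ext' {A B : Oct F} (ha : A.a = B.a) (hb : A.b = B.b) (hc : A.c = B.c)
    (hd : A.d = B.d) : A = B := by
  cases A; cases B; simp_all

lemma key (P Q : Oct F) :
    (⟨0, ![1, 0, 0], 0, 0⟩ : Oct F) * P + (⟨0, 0, ![0, 1, 0], 0⟩ : Oct F) * Q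
    = ⟨P.c 0, ![P.d + Q.c 2, 0, -(Q.c 0)], ![0, -(P.b 2) + Q.a, P.b 1], Q.b 1⟩ := by
  rw [mul_def, mul_def, add_def]
  refine ext' ?_ ?_ ?_ ?_
  · simp [dot]
  · funext i; fin_cases i <;> (simp [cross, dot]; try ring)
  · funext i; fin_cases i <;> (simp [cross, dot]; try ring)
  · simp [dot]

end Oct

open Oct
theorem stmt_14 {F : Type*} [Field F] [IsAlgClosed F] (A : Oct F)
    (k₁ k₂ : ℕ) (hk₁ : 2 ≤ k₁) (hk₂ : 2 ≤ k₂) :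
    (∃ X Y : Oct F,
        A = (⟨0, ![1, 0, 0], 0, 0⟩ : Oct F) * pow X k₁
          + (⟨0, 0, ![0, 1, 0], 0⟩ : Oct F) * pow Y k₂)
      ↔ ∃ α b₁ b₃ c₂ c₃ δ : F,
          A = (⟨α, ![b₁, 0, b₃], ![0, c₂, c₃], δ⟩ : Oct F) := by
  constructor
  · rintro ⟨X, Y, rfl⟩
    refine ⟨(pow X k₁).c 0, (pow X k₁).d + (pow Y k₂).c 2, -((pow Y k₂).c 0),
      -((pow X k₁).b 2) + (pow Y k₂).a, (pow X k₁).b 1, (pow Y k₂).b 1, ?_⟩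
    rw [key]
  · rintro ⟨α, b₁, b₃, c₂, c₃, δ, rfl⟩
    obtain ⟨k₁', rfl⟩ : ∃ m, k₁ = m + 1 := ⟨k₁ - 1, by omega⟩
    obtain ⟨k₂', rfl⟩ : ∃ m, k₂ = m + 1 := ⟨k₂ - 1, by omega⟩
    set X : Oct F := ⟨0, ![0, c₃, 0], ![α, 0, 0], 1⟩ with hXdef
    have hX : pow X (k₁' + 1) = X := pow_idem _ _ (by simp [dot]) k₁'
    by_cases hc : c₂ = 0
    · set Y : Oct F := ⟨0, ![0, δ, 0], ![-b₃, 0, b₁ - 1], 1⟩ with hYdef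
      have hY : pow Y (k₂' + 1) = Y := pow_idem _ _ (by simp [dot]) k₂'
      refine ⟨X, Y, ?_⟩
      rw [hX, hY, key, hXdef, hYdef]
      refine ext' ?_ ?_ ?_ ?_
      · simp
      · funext i; fin_cases i <;> (simp; try ring)
      · funext i; fin_cases i <;> (simp [hc]; try ring)
      · simp
    · obtain ⟨η, hη⟩ := IsAlgClosed.exists_pow_nat_eq c₂ (n := k₂' + 1) (by omega)
      have hη0 : η ≠ 0 := by
        intro h; apply hc; rw [← hη, h]; simp
      have ht : η ^ k₂' ≠ 0 := pow_ne_zero _ hη0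
      set Y : Oct F := ⟨η, ![0, δ / η ^ k₂', 0],
        ![-b₃ / η ^ k₂', 0, (b₁ - 1) / η ^ k₂'], 0⟩ with hYdef
      have hY : pow Y (k₂' + 1) =
          ⟨η ^ k₂' * η, (η ^ k₂') • Y.b, (η ^ k₂') • Y.c, 0⟩ :=
        pow_scaled η _ _ (by simp [dot]) k₂'
      refine ⟨X, Y, ?_⟩
      rw [hX, hY, key, hXdef, hYdef]
      refine ext' ?_ ?_ ?_ ?_
      · simp
      · funext i; fin_cases i <;> (simp; try field_simp; try ring)
      · funext i
        fin_cases i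
        · simp
        · simp only [Matrix.cons_val_one, Matrix.head_cons, Matrix.cons_val_zero]
          rw [← hη, pow_succ]
          simp
        · simp
      · simp only [Pi.smul_apply, smul_eq_mul, Matrix.cons_val_one, Matrix.head_cons, Matrix.cons_val_zero]
        field_simp
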